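/- arXiv:1303.2866 — 3 statements merged into one kernel-verified Lean document; each statement's English description precedes it below -/
import Mathlib

section
/- Let λ ∈ ℂ be nonzero, θ a unit complex number, and let (z(t), y(t)) be a differentiable path with y(t) ≠ 0 satisfying λ·y'(t) = y(t)·(1 + R(t))·z'(t) and z'(t) = -θ·λ/|λ| for a continuous function R: I → ℂ. Then d/dt log|y(t)| = Re(-θ·(1 + R(t)))/|λ|. In particular, if |R(t)| ≤ M < 1 and |arg θ| < arccos M for all t, then t ↦ |y(t)| is strictly decreasing. -/
open Complex

/-- Monotonicity along a ray of a stability beam for a nondegenerate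
singularity: if `λ y' = y (1 + R) z'` with `z' = -θ λ / |λ|`, then
`(log |y|)' = Re (-θ (1 + R)) / |λ|`; if moreover `|R| ≤ M < 1` and
`|arg θ| < arccos M`, then `|y|` is strictly decreasing. -/
theorem stability_beam_nondegenerate
    (l : ℂ) (hl : l ≠ 0) (θ : ℂ) (hθ : ‖θ‖ = 1)
    (z y : ℝ → ℂ) (y' : ℝ → ℂ) (R : ℝ → ℂ) (hR : Continuous R)
    (hy0 : ∀ t, y t ≠ 0)
    (hz : ∀ t : ℝ, HasDerivAt z (-θ * l / (‖l‖ : ℂ)) t)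
    (hy : ∀ t : ℝ, HasDerivAt y (y' t) t)
    (hrel : ∀ t : ℝ, l * y' t = y t * (1 + R t) * (-θ * l / (‖l‖ : ℂ))) :
    (∀ t : ℝ, HasDerivAt (fun s => Real.log (‖y s‖))
        ((-θ * (1 + R t)).re / ‖l‖) t) ∧
    (∀ M : ℝ, M < 1 → (∀ t, ‖R t‖ ≤ M) →
      |θ.arg| < Real.arccos M →
      StrictAnti (fun t => ‖y t‖)) := by
  have habs : (0:ℝ) < ‖l‖ := by
    simpa using (norm_pos_iff.mpr hl)
  have habs' : (‖l‖ : ℂ) ≠ 0 := by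
    exact_mod_cast ne_of_gt habs
  have key : ∀ t : ℝ, HasDerivAt (fun s => Real.log (‖y s‖))
      ((-θ * (1 + R t)).re / ‖l‖) t := by
    intro t
    have hy' : y' t = y t * (-θ * (1 + R t) / (‖l‖ : ℂ)) := by
      have h := hrel t
      apply mul_left_cancel₀ hl
      rw [h]
      field_simp
    have hu : HasDerivAt (fun s => (y s).re) ((y' t).re) t :=
      Complex.reCLM.hasFDerivAt.comp_hasDerivAt t (hy t)
    have hv : HasDerivAt (fun s => (y s).im) ((y' t).im) t :=
      Complex.imCLM.hasFDerivAt.comp_hasDerivAt t (hy t)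
    have hg : HasDerivAt (fun s => Complex.normSq (y s))
        (2 * ((y t).re * (y' t).re + (y t).im * (y' t).im)) t := by
      have h := (hu.mul hu).add (hv.mul hv)
      have heq : (fun s => Complex.normSq (y s)) =
          fun s => (y s).re * (y s).re + (y s).im * (y s).im := by
        funext s; simp [Complex.normSq_apply]
      rw [heq]
      exact h.congr_deriv (by ring)
    have hne : Complex.normSq (y t) ≠ 0 := by
      simpa [Complex.normSq_eq_norm_sq] using hy0 t
    have hlog := ((Real.hasDerivAt_log hne).comp t hg).div_const 2
    have heq2 : (fun s => Real.log (‖y s‖)) =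
        fun s => Real.log (Complex.normSq (y s)) / 2 := by
      funext s
      rw [Complex.norm_def, Real.log_sqrt (Complex.normSq_nonneg _)]
    rw [heq2]
    refine hlog.congr_deriv ?_
    symm
    -- compute the derivative value
    set c : ℂ := -θ * (1 + R t) / (‖l‖ : ℂ) with hc
    have hre : (y' t).re = (y t).re * c.re - (y t).im * c.im := by
      rw [hy']; simp [Complex.mul_re]
    have him : (y' t).im = (y t).re * c.im + (y t).im * c.re := by
      rw [hy']; simp [Complex.mul_im]
    have hcre : c.re = (-θ * (1 + R t)).re / ‖l‖ := by
      rw [hc, Complex.div_ofReal_re]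
    have hnsq : Complex.normSq (y t) = (y t).re * (y t).re + (y t).im * (y t).im := by
      simp [Complex.normSq_apply]
    have h3 : (y t).re * ((y t).re * c.re - (y t).im * c.im) +
        (y t).im * ((y t).re * c.im + (y t).im * c.re) = Complex.normSq (y t) * c.re := by
      rw [hnsq]; ring
    rw [hre, him, h3, ← hcre]
    field_simp [hne]
  refine ⟨key, ?_⟩
  intro M hM1 hRM hθarg
  have hM0 : (0:ℝ) ≤ M := le_trans (norm_nonneg (R 0)) (hRM 0)
  have hneg : ∀ t : ℝ, (-θ * (1 + R t)).re / ‖l‖ < 0 := by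
    intro t
    apply div_neg_of_neg_of_pos _ habs
    have hθ0 : θ ≠ 0 := by
      intro h; rw [h] at hθ; simp at hθ
    have hreθ : θ.re = Real.cos |θ.arg| := by
      rw [Real.cos_abs]
      have := Complex.cos_arg hθ0
      rw [hθ] at this
      simpa using this.symm
    have hMθ : M < θ.re := by
      rw [hreθ]
      have h1 : Real.cos (Real.arccos M) < Real.cos |θ.arg| := by
        apply Real.strictAntiOn_cos
        · exact ⟨abs_nonneg _, le_trans (le_of_lt hθarg) (Real.arccos_le_pi M)⟩
        · exact ⟨Real.arccos_nonneg M, Real.arccos_le_pi M⟩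
        · exact hθarg
      rwa [Real.cos_arccos (by linarith) (le_of_lt hM1)] at h1
    have habsR : |(θ * R t).re| ≤ M := by
      calc |(θ * R t).re| ≤ ‖θ * R t‖ := Complex.abs_re_le_norm _
        _ = ‖R t‖ := by rw [norm_mul, hθ, one_mul]
        _ ≤ M := hRM t
    have : 0 < (θ * (1 + R t)).re := by
      have : (θ * (1 + R t)).re = θ.re + (θ * R t).re := by
        simp [mul_add]
      rw [this]
      have := abs_le.mp habsR
      linarith
    have hexp : (-θ * (1 + R t)).re = -((θ * (1 + R t)).re) := by
      simp
    linarith [hexp ▸ neg_neg_iff_pos.mpr this]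
  have hderiv : ∀ x : ℝ, deriv (fun s => Real.log (‖y s‖)) x < 0 := by
    intro x
    rw [(key x).deriv]
    exact hneg x
  have hSA : StrictAnti (fun s => Real.log (‖y s‖)) :=
    strictAnti_of_deriv_neg hderiv
  intro a b hab
  have := hSA hab
  have ha : (0:ℝ) < ‖y b‖ := norm_pos_iff.mpr (hy0 b)
  have hb : (0:ℝ) < ‖y a‖ := norm_pos_iff.mpr (hy0 a)
  exact (Real.log_lt_log_iff ha hb).mp this
end

section
/- For every c ∈ (0,1), the path Γ_c: [-π, π] → ℂ², Γ_c(t) = (c·e^{it}, exp(-(1/c)·(1 + e^{-it}))), is tangent to the foliation defined by ω₀ = x² dy - y dx; that is, writing Γ_c(t) = (x(t), y(t)), one has x(t)²·y'(t) = y(t)·x'(t) for all t. Moreover both endpoints Γ_c(-π) and Γ_c(π) equal (-c, 1), and |y(t)| = exp(-(1/c)(1 + cos t)) ≤ 1 for all t. -/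
open Complex

lemma hasDerivAt_x_aux (c : ℝ) (t : ℝ) :
    HasDerivAt (fun t : ℝ => (c : ℂ) * Complex.exp (Complex.I * (t : ℂ)))
      ((c : ℂ) * Complex.I * Complex.exp (Complex.I * (t : ℂ))) t := by
  have h : HasDerivAt (fun z : ℂ => (c : ℂ) * Complex.exp (Complex.I * z))
      ((c : ℂ) * Complex.I * Complex.exp (Complex.I * (t : ℂ))) (t : ℂ) := by
    have h1 : HasDerivAt (fun z : ℂ => Complex.I * z) Complex.I (t : ℂ) := by
      simpa using (hasDerivAt_id (t : ℂ)).const_mul Complex.I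
    have h2 := h1.cexp
    have h3 := h2.const_mul (c : ℂ)
    exact h3.congr_deriv (by ring)
  exact h.comp_ofReal

lemma hasDerivAt_y_aux (c : ℝ) (t : ℝ) :
    HasDerivAt (fun t : ℝ =>
        Complex.exp (-(1 / (c : ℂ)) * (1 + Complex.exp (-Complex.I * (t : ℂ)))))
      (Complex.exp (-(1 / (c : ℂ)) * (1 + Complex.exp (-Complex.I * (t : ℂ)))) *
        ((Complex.I / (c : ℂ)) * Complex.exp (-Complex.I * (t : ℂ)))) t := by
  have h : HasDerivAt (fun z : ℂ =>
      Complex.exp (-(1 / (c : ℂ)) * (1 + Complex.exp (-Complex.I * z))))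
      (Complex.exp (-(1 / (c : ℂ)) * (1 + Complex.exp (-Complex.I * (t : ℂ)))) *
        ((Complex.I / (c : ℂ)) * Complex.exp (-Complex.I * (t : ℂ)))) (t : ℂ) := by
    have h1 : HasDerivAt (fun z : ℂ => -Complex.I * z) (-Complex.I) (t : ℂ) := by
      simpa using (hasDerivAt_id (t : ℂ)).const_mul (-Complex.I)
    have h2 := h1.cexp
    have h3 : HasDerivAt (fun z : ℂ => -(1 / (c : ℂ)) * (1 + Complex.exp (-Complex.I * z)))
        (-(1 / (c : ℂ)) * (Complex.exp (-Complex.I * (t : ℂ)) * -Complex.I)) (t : ℂ) :=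
      ((h2.const_add 1).const_mul _)
    have h4 := h3.cexp
    exact h4.congr_deriv (by field_simp)
  exact h.comp_ofReal

/-- The paths `Γ_c(t) = (c e^{it}, exp (-(1/c)(1 + e^{-it})))`, `c ∈ (0,1)`,
are tangent to the model saddle–node foliation `x² dy = y dx`, have both
endpoints at `(-c, 1)`, and satisfy `|y(t)| = exp (-(1/c)(1 + cos t)) ≤ 1`. -/
theorem inamovible_path_model_saddle_node (c : ℝ) (hc0 : 0 < c) (hc1 : c < 1) :
    let x : ℝ → ℂ := fun t => (c : ℂ) * Complex.exp (Complex.I * (t : ℂ))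
    let y : ℝ → ℂ := fun t =>
      Complex.exp (-(1 / (c : ℂ)) * (1 + Complex.exp (-Complex.I * (t : ℂ))))
    (∀ t ∈ Set.Icc (-Real.pi) Real.pi,
      (x t) ^ 2 * deriv y t = y t * deriv x t) ∧
    (x (-Real.pi) = -(c : ℂ) ∧ y (-Real.pi) = 1 ∧
      x Real.pi = -(c : ℂ) ∧ y Real.pi = 1) ∧
    (∀ t ∈ Set.Icc (-Real.pi) Real.pi,
      ‖y t‖ = Real.exp (-(1 / c) * (1 + Real.cos t)) ∧
      ‖y t‖ ≤ 1) := by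
  intro x y
  have hcne : (c : ℂ) ≠ 0 := by exact_mod_cast hc0.ne'
  have hexp_pi : Complex.exp (Complex.I * (Real.pi : ℂ)) = -1 := by
    rw [mul_comm]; exact Complex.exp_pi_mul_I
  have hexp_npi : Complex.exp (-Complex.I * (Real.pi : ℂ)) = -1 := by
    have : -Complex.I * (Real.pi : ℂ) = -(Real.pi * Complex.I) := by ring
    rw [this, Complex.exp_neg, Complex.exp_pi_mul_I]
    norm_num
  have hexp_pi' : Complex.exp (Complex.I * ((-Real.pi : ℝ) : ℂ)) = -1 := by
    push_cast
    have : Complex.I * (-(Real.pi : ℂ)) = -(Real.pi * Complex.I) := by ring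
    rw [this, Complex.exp_neg, Complex.exp_pi_mul_I]; norm_num
  have hexp_npi' : Complex.exp (-Complex.I * ((-Real.pi : ℝ) : ℂ)) = -1 := by
    push_cast
    have : -Complex.I * (-(Real.pi : ℂ)) = Real.pi * Complex.I := by ring
    rw [this, Complex.exp_pi_mul_I]
  refine ⟨?_, ⟨?_, ?_, ?_, ?_⟩, ?_⟩
  · intro t _
    rw [(hasDerivAt_y_aux c t).deriv, (hasDerivAt_x_aux c t).deriv]
    show ((c : ℂ) * Complex.exp (Complex.I * (t : ℂ))) ^ 2 * _ = _
    have key : Complex.exp (Complex.I * (t : ℂ)) * Complex.exp (-Complex.I * (t : ℂ)) = 1 := by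
      rw [← Complex.exp_add]
      ring_nf
      exact Complex.exp_zero
    have hstep : ((c : ℂ) * Complex.exp (Complex.I * (t : ℂ))) ^ 2 *
        (Complex.exp (-(1 / (c : ℂ)) * (1 + Complex.exp (-Complex.I * (t : ℂ)))) *
          ((Complex.I / (c : ℂ)) * Complex.exp (-Complex.I * (t : ℂ))))
        = Complex.exp (-(1 / (c : ℂ)) * (1 + Complex.exp (-Complex.I * (t : ℂ)))) *
          ((c : ℂ) * Complex.I * Complex.exp (Complex.I * (t : ℂ))) *
          ((c : ℂ) * (1 / (c : ℂ))) *
          (Complex.exp (Complex.I * (t : ℂ)) * Complex.exp (-Complex.I * (t : ℂ))) := by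
      ring
    rw [hstep, key, mul_one_div_cancel hcne, mul_one, mul_one]
  · show (c : ℂ) * _ = _
    rw [hexp_pi']; ring
  · show Complex.exp _ = 1
    rw [hexp_npi']
    norm_num
  · show (c : ℂ) * _ = _
    rw [hexp_pi]; ring
  · show Complex.exp _ = 1
    rw [hexp_npi]
    norm_num
  · intro t _
    have habs : ‖y t‖ = Real.exp (-(1 / c) * (1 + Real.cos t)) := by
      show ‖Complex.exp _‖ = _
      rw [Complex.norm_exp]
      congr 1
      have h1 : -Complex.I * (t : ℂ) = ((-t : ℝ) : ℂ) * Complex.I := by push_cast; ring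
      have h2 : (-(1 / (c : ℂ)) * (1 + Complex.exp (-Complex.I * (t : ℂ)))).re
          = -(1 / c) * (1 + (Complex.exp (-Complex.I * (t : ℂ))).re) := by
        simp [Complex.mul_re, Complex.add_re, Complex.div_re]
        try ring
      rw [h2, h1, Complex.exp_ofReal_mul_I_re, Real.cos_neg]
    refine ⟨habs, ?_⟩
    rw [habs]
    have h3 : -(1 / c) * (1 + Real.cos t) ≤ 0 := by
      have h4 : 0 ≤ 1 + Real.cos t := by nlinarith [Real.neg_one_le_cos t]
      have h5 : 0 < 1 / c := by positivity
      nlinarith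
    calc Real.exp (-(1 / c) * (1 + Real.cos t)) ≤ Real.exp 0 := Real.exp_le_exp.2 h3
      _ = 1 := Real.exp_zero
end

section
/- Let k ≥ 1 and for j ∈ ℤ define the strip Ṽ_j^β = { z ∈ ℂ : Re z < log ρ, |Im z − (2j+1)π/k| < π/k + β }, where 0 < β' < β < π/(2k). Then for every z* ∈ Ṽ_j^{β'}, there exists δ > 0 (depending only on k, β, β') such that every trajectory z_θ of ż = −θ·exp(k z) starting at z* with |arg θ| < δ remains in Ṽ_j^β for as long as Re z_θ(t) < log ρ. -/
open Complex

/-- derivative of the imaginary part of the trajectory -/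
private lemma im_deriv_formula (θ : ℂ) (k : ℕ) (w : ℂ) :
    (-θ * Complex.exp ((k : ℂ) * w)).im =
      -(‖θ‖ * Real.exp (k * w.re) *
        Real.sin (k * w.im + θ.arg)) := by
  have hre : θ.re = ‖θ‖ * Real.cos θ.arg := (Complex.norm_mul_cos_arg θ).symm
  have him : θ.im = ‖θ‖ * Real.sin θ.arg := (Complex.norm_mul_sin_arg θ).symm
  have h1 : ((k : ℂ) * w).re = k * w.re := by simp
  have h2 : ((k : ℂ) * w).im = k * w.im := by simp
  rw [Real.sin_add]
  simp only [neg_mul, Complex.neg_im, Complex.mul_im, Complex.exp_re, Complex.exp_im,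
    h1, h2, hre, him]
  ring

/-- Sectorial confinement of stability beams: given `0 < β' < β < π/(2k)`
and `ρ > 0`, there is `δ > 0` (depending only on `k, β, β'`) such that every
trajectory of `ż = −θ e^{kz}` with `|arg θ| < δ` starting in the smaller
strip `Ṽ_j^{β'}` stays in the larger strip `Ṽ_j^β` as long as
`Re z < log ρ`. -/
theorem stability_beam_stays_in_sector
    (k : ℕ) (hk : 1 ≤ k) (ρ : ℝ) (hρ : 0 < ρ) (β β' : ℝ)
    (hβ'0 : 0 < β') (hβ'β : β' < β) (hβ : β < Real.pi / (2 * k)) (j : ℤ) :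
    let V : ℝ → Set ℂ := fun b =>
      {z : ℂ | z.re < Real.log ρ ∧
        |z.im - (2 * (j : ℝ) + 1) * Real.pi / k| < Real.pi / k + b}
    ∃ δ > 0, ∀ zstar ∈ V β', ∀ θ : ℂ, θ ≠ 0 → |θ.arg| < δ →
      ∀ z : ℝ → ℂ, z 0 = zstar →
      (∀ t : ℝ, 0 ≤ t → HasDerivAt z (-θ * Complex.exp ((k : ℂ) * z t)) t) →
      ∀ t : ℝ, 0 ≤ t → (∀ s ∈ Set.Icc 0 t, (z s).re < Real.log ρ) →
        z t ∈ V β := by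
  intro V
  have hk0 : (0 : ℝ) < (k : ℝ) := by exact_mod_cast hk
  have hβ0 : 0 < β := hβ'0.trans hβ'β
  have hkβπ : (k : ℝ) * β < Real.pi / 2 := by
    have := (mul_lt_mul_iff_right₀ hk0).2 hβ
    calc (k : ℝ) * β < k * (Real.pi / (2 * k)) := this
    _ = Real.pi / 2 := by field_simp
  refine ⟨(k : ℝ) * β, by positivity, ?_⟩
  intro zstar hzstar θ hθ hargθ z hz0 hderiv t ht hre
  refine ⟨hre t ⟨ht, le_refl t⟩, ?_⟩
  set c : ℝ := (2 * (j : ℝ) + 1) * Real.pi / k with hc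
  set h : ℝ → ℝ := fun s => (z s).im with hhdef
  set lo : ℝ := c - (Real.pi / k + β) with hlo
  set hi : ℝ := c + (Real.pi / k + β) with hhi
  have hlohi : lo < hi := by
    have : 0 < Real.pi / k + β := by positivity
    rw [hlo, hhi]; linarith
  -- continuity of h
  have hcont : ∀ s : ℝ, 0 ≤ s → ContinuousAt h s := fun s hs =>
    (Complex.continuous_im.continuousAt).comp (hderiv s hs).continuousAt
  -- derivative of h
  have hderivh : ∀ s : ℝ, 0 ≤ s → HasDerivAt h
      (-(‖θ‖ * Real.exp (k * (z s).re) * Real.sin (k * h s + θ.arg))) s := by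
    intro s hs
    have h1 := Complex.imCLM.hasFDerivAt.comp_hasDerivAt s (hderiv s hs)
    have h2 : Complex.imCLM (-θ * Complex.exp ((k : ℂ) * z s)) =
        -(‖θ‖ * Real.exp (k * (z s).re) * Real.sin (k * h s + θ.arg)) := by
      simpa using im_deriv_formula θ k (z s)
    rw [h2] at h1
    exact h1
  -- initial condition
  have h0 : h 0 ∈ Set.Ioo lo hi := by
    have h2 := hzstar.2
    rw [abs_lt] at h2
    constructor
    · show lo < (z 0).im
      rw [hlo, hz0]; linarith [h2.1]
    · show (z 0).im < hi
      rw [hhi, hz0]; linarith [h2.2]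
  have key : h t ∈ Set.Ioo lo hi := by
    by_contra hcon
    set S : Set ℝ := {s | s ∈ Set.Icc 0 t ∧ h s ∉ Set.Ioo lo hi} with hS
    have hSne : S.Nonempty := ⟨t, ⟨ht, le_refl t⟩, hcon⟩
    have hSbdd : BddBelow S := ⟨0, fun s hs => hs.1.1⟩
    set t1 : ℝ := sInf S with ht1
    have ht1lb : ∀ s ∈ S, t1 ≤ s := fun s hs => csInf_le hSbdd hs
    have ht10 : 0 ≤ t1 := le_csInf hSne fun s hs => hs.1.1
    have ht1t : t1 ≤ t := ht1lb t ⟨⟨ht, le_refl t⟩, hcon⟩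
    have hbefore : ∀ s : ℝ, 0 ≤ s → s < t1 → h s ∈ Set.Ioo lo hi := by
      intro s hs0 hst1
      by_contra hcs
      exact absurd (ht1lb s ⟨⟨hs0, hst1.le.trans ht1t⟩, hcs⟩) (not_le.2 hst1)
    have ht1out : h t1 ∉ Set.Ioo lo hi := by
      obtain ⟨u, hmono, hulim, hu⟩ := exists_seq_tendsto_sInf hSne hSbdd
      have hhu : Filter.Tendsto (fun n => h (u n)) Filter.atTop (nhds (h t1)) :=
        (hcont t1 ht10).tendsto.comp hulim
      exact isOpen_Ioo.isClosed_compl.mem_of_tendsto hhu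
        (Filter.Eventually.of_forall fun n => (hu n).2)
    have ht1pos : 0 < t1 := by
      rcases ht10.lt_or_eq with hp | he
      · exact hp
      · exact absurd h0 (he ▸ ht1out)
    have ht1in : h t1 ∈ Set.Icc lo hi := by
      have htd : Filter.Tendsto h (nhdsWithin t1 (Set.Ioo 0 t1)) (nhds (h t1)) :=
        ((hcont t1 ht10).tendsto).mono_left nhdsWithin_le_nhds
      have hne : (nhdsWithin t1 (Set.Ioo 0 t1)).NeBot := right_nhdsWithin_Ioo_neBot ht1pos
      refine isClosed_Icc.mem_of_tendsto htd ?_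
      filter_upwards [self_mem_nhdsWithin] with s hs
      exact Set.Ioo_subset_Icc_self (hbefore s hs.1.le hs.2)
    have hcases : h t1 = lo ∨ h t1 = hi := by
      rcases ht1in.1.lt_or_eq with h1 | h1
      · rcases ht1in.2.lt_or_eq with h2 | h2
        · exact absurd ⟨h1, h2⟩ ht1out
        · exact Or.inr h2
      · exact Or.inl h1.symm
    set d : ℝ := -(‖θ‖ * Real.exp (k * (z t1).re) * Real.sin (k * h t1 + θ.arg))
      with hddef
    have hdd : HasDerivAt h d t1 := hderivh t1 ht10
    have habsθ : 0 < ‖θ‖ := norm_pos_iff.mpr hθ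
    have hargbd : -((k : ℝ) * β) < θ.arg ∧ θ.arg < (k : ℝ) * β := abs_lt.1 hargθ
    have hslope : Filter.Tendsto (slope h t1) (nhdsWithin t1 {t1}ᶜ) (nhds d) :=
      hasDerivAt_iff_tendsto_slope.1 hdd
    have hslope' : Filter.Tendsto (slope h t1) (nhdsWithin t1 (Set.Ioo 0 t1)) (nhds d) :=
      hslope.mono_left (nhdsWithin_mono t1 (fun s hs => ne_of_lt hs.2))
    have hne : (nhdsWithin t1 (Set.Ioo 0 t1)).NeBot := right_nhdsWithin_Ioo_neBot ht1pos
    rcases hcases with hcase | hcase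
    · -- h t1 = lo : derivative is positive, but left slope is ≤ 0
      have hkh : (k : ℝ) * h t1 + θ.arg =
          (θ.arg - k * β) + ((j : ℤ) : ℝ) * (2 * Real.pi) := by
        rw [hcase, hlo, hc]; field_simp; ring
      have hsin : Real.sin (k * h t1 + θ.arg) < 0 := by
        rw [hkh, Real.sin_add_int_mul_two_pi]
        apply Real.sin_neg_of_neg_of_neg_pi_lt
        · linarith [hargbd.2]
        · linarith [hargbd.1, hkβπ, Real.pi_pos]
      have hdpos : 0 < d := by
        rw [hddef]
        have hP : 0 < ‖θ‖ * Real.exp (k * (z t1).re) :=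
          mul_pos habsθ (Real.exp_pos _)
        have := mul_neg_of_pos_of_neg hP hsin
        linarith
      have hle : d ≤ 0 := by
        refine le_of_tendsto hslope' ?_
        filter_upwards [self_mem_nhdsWithin] with s hs
        have hhs : lo < h s := (hbefore s hs.1.le hs.2).1
        rw [slope_def_field]
        have h1 : 0 < h s - h t1 := by rw [hcase]; linarith
        have h2 : s - t1 < 0 := by linarith [hs.2]
        exact le_of_lt (div_neg_of_pos_of_neg h1 h2)
      linarith
    · -- h t1 = hi : derivative is negative, but left slope is ≥ 0
      have hkh : (k : ℝ) * h t1 + θ.arg =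
          (θ.arg + k * β) + (((j : ℤ) + 1 : ℤ) : ℝ) * (2 * Real.pi) := by
        rw [hcase, hhi, hc]; push_cast; field_simp; ring
      have hsin : 0 < Real.sin (k * h t1 + θ.arg) := by
        rw [hkh, Real.sin_add_int_mul_two_pi]
        apply Real.sin_pos_of_pos_of_lt_pi
        · linarith [hargbd.1]
        · linarith [hargbd.2, hkβπ, Real.pi_pos]
      have hdneg : d < 0 := by
        rw [hddef]
        have hP : 0 < ‖θ‖ * Real.exp (k * (z t1).re) :=
          mul_pos habsθ (Real.exp_pos _)
        have := mul_pos hP hsin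
        linarith
      have hge : 0 ≤ d := by
        refine ge_of_tendsto hslope' ?_
        filter_upwards [self_mem_nhdsWithin] with s hs
        have hhs : h s < hi := (hbefore s hs.1.le hs.2).2
        rw [slope_def_field]
        have h1 : h s - h t1 < 0 := by rw [hcase]; linarith
        have h2 : s - t1 < 0 := by linarith [hs.2]
        exact le_of_lt (div_pos_of_neg_of_neg h1 h2)
      linarith
  rw [abs_lt]
  have k1 := key.1
  have k2 := key.2
  rw [hlo] at k1
  rw [hhi] at k2
  exact ⟨by linarith, by linarith⟩
end
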